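/- For positive integers m and r and a real number k_f < 1 with k_f not an integer, ∫_0^∞ Γ(1-k_f, 4π m y) y^{κ-2} e^{-4π r y} dy = -(4π)^{1-κ} m^{1-k_f} Γ(1-k_f) (κ-2)! r^{1-κ} ((r+m)^{1-k_g} P_{κ,2-k_f}(r,m) - m^{k_f-1}), where κ ≥ 2 is an integer, k_g = κ - k_f, and P_{a,b}(X,Y) = ∑_{j=0}^{a-2} C(j+b-2, j) X^j (X+Y)^{a-2-j}. -/

import Mathlib

open Real

/-- The upper incomplete Gamma function `Γ(s,x) = ∫_x^∞ t^{s-1} e^{-t} dt`. -/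
noncomputable def uGamma (s x : ℝ) : ℝ := ∫ t in Set.Ioi x, t ^ (s - 1) * Real.exp (-t)

/-- The generalized binomial coefficient `C(x,k) = Γ(x+1)/(k! Γ(x-k+1))`. -/
noncomputable def genChoose (x : ℝ) (k : ℕ) : ℝ :=
  Real.Gamma (x + 1) / ((k.factorial : ℝ) * Real.Gamma (x - k + 1))

/-- The polynomial `P_{a,b}(X,Y) = ∑_{j=0}^{a-2} C(j+b-2, j) X^j (X+Y)^{a-2-j}`. -/
noncomputable def Ppoly (a : ℕ) (b : ℝ) (X Y : ℝ) : ℝ :=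
  ∑ j ∈ Finset.range (a - 1), genChoose ((j : ℝ) + b - 2) j * X ^ j * (X + Y) ^ (a - 2 - j)

namespace IGIP

open MeasureTheory Set Filter intervalIntegral

/-- Coefficient of the antiderivative of `y^n e^{-By}`. -/
noncomputable def cco (n : ℕ) (B : ℝ) (i : ℕ) : ℝ :=
  (n.factorial : ℝ) / (i.factorial : ℝ) * B ^ i / B ^ (n + 1)

/-- Antiderivative of `y^n e^{-By}`. -/
noncomputable def Ffn (n : ℕ) (B : ℝ) (y : ℝ) : ℝ :=
  -(Real.exp (-(B * y)) * ∑ i ∈ Finset.range (n + 1), cco n B i * y ^ i)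

lemma f_meas (s : ℝ) : Measurable (fun t : ℝ => t ^ (s - 1) * Real.exp (-t)) := by
  fun_prop

lemma f_int {s : ℝ} (hs : 0 < s) :
    IntegrableOn (fun t : ℝ => t ^ (s - 1) * Real.exp (-t)) (Ioi 0) :=
  (Real.GammaIntegral_convergent hs).congr_fun (fun t _ => mul_comm _ _) measurableSet_Ioi

lemma rexp_int {t c : ℝ} (ht : 0 < t) (hc : 0 < c) :
    IntegrableOn (fun y : ℝ => y ^ (t - 1) * Real.exp (-(c * y))) (Ioi 0) := by
  have h := integrableOn_rpow_mul_exp_neg_mul_rpow (p := 1) (s := t - 1) (b := c)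
    (by linarith) one_pos hc
  refine h.congr_fun (fun y _ => ?_) measurableSet_Ioi
  simp only [rpow_one, pow_one, neg_mul]

lemma uGamma_zero {s : ℝ} (hs : 0 < s) : uGamma s 0 = Real.Gamma s := by
  rw [Real.Gamma_eq_integral hs, uGamma]
  exact setIntegral_congr_fun measurableSet_Ioi fun t _ => mul_comm _ _

lemma uGamma_split {s : ℝ} (hs : 0 < s) {x : ℝ} (hx : 0 ≤ x) :
    uGamma s x = Real.Gamma s - ∫ t in Ioc (0:ℝ) x, t ^ (s - 1) * Real.exp (-t) := by
  have h1 : IntegrableOn (fun t : ℝ => t ^ (s - 1) * Real.exp (-t)) (Ioc 0 x) :=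
    (f_int hs).mono_set Ioc_subset_Ioi_self
  have h2 : IntegrableOn (fun t : ℝ => t ^ (s - 1) * Real.exp (-t)) (Ioi x) :=
    (f_int hs).mono_set (Ioi_subset_Ioi hx)
  have h3 := setIntegral_union (Ioc_disjoint_Ioi (le_refl x)) measurableSet_Ioi h1 h2
    (f := fun t : ℝ => t ^ (s - 1) * Real.exp (-t)) (μ := volume)
  rw [Ioc_union_Ioi_eq_Ioi hx] at h3
  have h0 : uGamma s 0 = Real.Gamma s := uGamma_zero hs
  rw [uGamma] at h0 ⊢
  rw [← h0]
  rw [h3]; ring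

lemma uGamma_nonneg {s x : ℝ} (hx : 0 ≤ x) : 0 ≤ uGamma s x := by
  refine setIntegral_nonneg measurableSet_Ioi fun t ht => ?_
  have : 0 ≤ t := le_trans hx (le_of_lt ht)
  positivity

lemma uGamma_le {s : ℝ} (hs : 0 < s) {x : ℝ} (hx : 0 ≤ x) : uGamma s x ≤ Real.Gamma s := by
  rw [uGamma_split hs hx]
  have h : 0 ≤ ∫ t in Ioc (0:ℝ) x, t ^ (s - 1) * Real.exp (-t) := by
    refine setIntegral_nonneg measurableSet_Ioc fun t ht => ?_
    have : 0 ≤ t := le_of_lt ht.1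
    positivity
  linarith

lemma uGamma_hasDeriv {s : ℝ} (hs : 0 < s) {x : ℝ} (hx : 0 < x) :
    HasDerivAt (uGamma s) (-(x ^ (s - 1) * Real.exp (-x))) x := by
  set f : ℝ → ℝ := fun t => t ^ (s - 1) * Real.exp (-t) with hf
  have hii : IntervalIntegrable f volume 0 x :=
    (intervalIntegrable_iff_integrableOn_Ioc_of_le hx.le).mpr
      ((f_int hs).mono_set Ioc_subset_Ioi_self)
  have hmeas : StronglyMeasurableAtFilter f (nhds x) :=
    ⟨univ, univ_mem, ((f_meas s).stronglyMeasurable).aestronglyMeasurable.restrict⟩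
  have hcont : ContinuousAt f x := by
    have h1 : ContinuousAt (fun t : ℝ => t ^ (s - 1)) x :=
      Real.continuousAt_rpow_const x (s - 1) (Or.inl hx.ne')
    exact h1.mul ((Real.continuous_exp.comp continuous_neg).continuousAt)
  have hint : HasDerivAt (fun u => ∫ t in (0:ℝ)..u, f t) (f x) x :=
    intervalIntegral.integral_hasDerivAt_right hii hmeas hcont
  have hD : HasDerivAt (fun u => Real.Gamma s - ∫ t in (0:ℝ)..u, f t) (0 - f x) x :=
    (hasDerivAt_const x (Real.Gamma s)).sub hint
  have heq : uGamma s =ᶠ[nhds x] fun u => Real.Gamma s - ∫ t in (0:ℝ)..u, f t := by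
    filter_upwards [Ioi_mem_nhds hx] with u hu
    rw [uGamma_split hs (le_of_lt hu), intervalIntegral.integral_of_le (le_of_lt hu)]
  have := hD.congr_of_eventuallyEq heq
  simpa using this

lemma uGamma_cwa {s : ℝ} (hs : 0 < s) : ContinuousWithinAt (uGamma s) (Ici 0) 0 := by
  set f : ℝ → ℝ := fun t => t ^ (s - 1) * Real.exp (-t) with hf
  have hint : IntegrableOn f (Icc (0:ℝ) 1) := by
    rw [integrableOn_Icc_iff_integrableOn_Ioc]
    exact (f_int hs).mono_set Ioc_subset_Ioi_self
  have hcont := intervalIntegral.continuousOn_primitive hint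
  have h0 : ContinuousWithinAt (fun x => ∫ t in Ioc (0:ℝ) x, f t) (Icc (0:ℝ) 1) 0 :=
    hcont 0 (by norm_num)
  have h1 : ContinuousWithinAt (uGamma s) (Icc (0:ℝ) 1) 0 := by
    refine (continuousWithinAt_const.sub h0).congr (fun x hx => uGamma_split hs hx.1) ?_
    exact uGamma_split hs le_rfl
  refine h1.mono_of_mem_nhdsWithin ?_
  have : Ici (0:ℝ) ∩ Iic 1 ∈ nhdsWithin (0:ℝ) (Ici 0) :=
    inter_mem_nhdsWithin (Ici 0) (Iic_mem_nhds (by norm_num))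
  rwa [Ici_inter_Iic] at this

lemma cco_succ {n : ℕ} {B : ℝ} (hB : B ≠ 0) (i : ℕ) :
    cco n B (i + 1) * ((i : ℝ) + 1) = B * cco n B i := by
  simp only [cco, Nat.factorial_succ]
  push_cast
  have hfac : (i.factorial : ℝ) ≠ 0 := Nat.cast_ne_zero.mpr i.factorial_ne_zero
  have hi1 : ((i : ℝ) + 1) ≠ 0 := by positivity
  field_simp
  ring

lemma cco_top {n : ℕ} {B : ℝ} (hB : B ≠ 0) : B * cco n B n = 1 := by
  simp only [cco]
  have hfac : (n.factorial : ℝ) ≠ 0 := Nat.cast_ne_zero.mpr n.factorial_ne_zero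
  field_simp [pow_succ]
  ring

lemma Ffn_zero (n : ℕ) (B : ℝ) : Ffn n B 0 = -(cco n B 0) := by
  simp [Ffn, Finset.sum_range_succ']

lemma Ffn_hasDeriv {n : ℕ} {B : ℝ} (hB : 0 < B) (y : ℝ) :
    HasDerivAt (Ffn n B) (y ^ n * Real.exp (-(B * y))) y := by
  have hS : HasDerivAt (fun y : ℝ => ∑ i ∈ Finset.range (n + 1), cco n B i * y ^ i)
      (∑ i ∈ Finset.range (n + 1), cco n B i * ((i : ℝ) * y ^ (i - 1))) y :=
    HasDerivAt.fun_sum fun i _ => (hasDerivAt_pow i y).const_mul _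
  have hE : HasDerivAt (fun y : ℝ => Real.exp (-(B * y))) (Real.exp (-(B * y)) * (-(B * 1))) y := by
    exact (((hasDerivAt_id y).const_mul B).neg).exp
  have hprod := (hE.mul hS).neg
  have key : ∀ z : ℝ, B * (∑ i ∈ Finset.range (n + 1), cco n B i * z ^ i)
      - (∑ i ∈ Finset.range (n + 1), cco n B i * ((i : ℝ) * z ^ (i - 1))) = z ^ n := by
    intro z
    have expand : B * (∑ i ∈ Finset.range (n + 1), cco n B i * z ^ i)
        - (∑ i ∈ Finset.range (n + 1), cco n B i * ((i : ℝ) * z ^ (i - 1)))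
        = ∑ i ∈ Finset.range (n + 1),
            (B * (cco n B i * z ^ i) - cco n B i * ((i : ℝ) * z ^ (i - 1))) := by
      rw [Finset.mul_sum, Finset.sum_sub_distrib]
    rw [expand, Finset.sum_range_succ']
    have hterm : ∀ i : ℕ,
        B * (cco n B (i + 1) * z ^ (i + 1)) - cco n B (i + 1) * (((i : ℝ) + 1) * z ^ (i + 1 - 1))
          = (fun j => B * cco n B j * z ^ j) (i + 1) - (fun j => B * cco n B j * z ^ j) i := by
      intro i
      have h1 := cco_succ (n := n) hB.ne' i
      simp only [Nat.add_sub_cancel]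
      have : cco n B (i + 1) * (((i : ℝ) + 1) * z ^ i) = (B * cco n B i) * z ^ i := by
        rw [← h1]; ring
      rw [this]; ring
    have h2 : ∀ i ∈ Finset.range n,
        B * (cco n B (i + 1) * z ^ (i + 1)) - cco n B (i + 1) * ((((i : ℕ) + 1 : ℕ) : ℝ) * z ^ (i + 1 - 1))
          = (fun j => B * cco n B j * z ^ j) (i + 1) - (fun j => B * cco n B j * z ^ j) i := by
      intro i _
      have := hterm i
      push_cast
      push_cast at this
      exact this
    rw [Finset.sum_congr rfl h2, Finset.sum_range_sub (fun j => B * cco n B j * z ^ j)]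
    simp only [Nat.cast_zero, pow_zero, zero_mul, mul_zero, sub_zero, mul_one]
    linear_combination (z ^ n) * cco_top (n := n) hB.ne'
  have : HasDerivAt (Ffn n B)
      (-(Real.exp (-(B * y)) * (-(B * 1)) * (∑ i ∈ Finset.range (n + 1), cco n B i * y ^ i)
        + Real.exp (-(B * y)) * ∑ i ∈ Finset.range (n + 1), cco n B i * ((i : ℝ) * y ^ (i - 1)))) y := by
    exact hprod
  convert this using 1
  have hk := key y
  calc y ^ n * Real.exp (-(B * y))
      = Real.exp (-(B * y)) * (B * (∑ i ∈ Finset.range (n + 1), cco n B i * y ^ i)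
          - (∑ i ∈ Finset.range (n + 1), cco n B i * ((i : ℝ) * y ^ (i - 1)))) := by
        rw [hk]; ring
    _ = _ := by ring

lemma Ffn_tendsto {n : ℕ} {B : ℝ} (hB : 0 < B) :
    Tendsto (Ffn n B) atTop (nhds 0) := by
  have h : ∀ i : ℕ, Tendsto (fun y : ℝ => cco n B i * (y ^ (i : ℝ) * Real.exp (-B * y)))
      atTop (nhds (cco n B i * 0)) :=
    fun i => (tendsto_rpow_mul_exp_neg_mul_atTop_nhds_zero (i : ℝ) B hB).const_mul _
  have hsum : Tendsto (fun y : ℝ => ∑ i ∈ Finset.range (n + 1),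
      cco n B i * (y ^ (i : ℝ) * Real.exp (-B * y))) atTop (nhds 0) := by
    have := tendsto_finset_sum (Finset.range (n + 1)) (fun i _ => h i)
    simpa using this
  have : Tendsto (fun y : ℝ => -(Real.exp (-(B * y)) *
      ∑ i ∈ Finset.range (n + 1), cco n B i * y ^ i)) atTop (nhds (-0)) := by
    refine Tendsto.neg (hsum.congr' ?_)
    filter_upwards [eventually_gt_atTop (0:ℝ)] with y hy
    rw [Finset.mul_sum]
    refine Finset.sum_congr rfl fun i _ => ?_
    rw [← Real.rpow_natCast y i, neg_mul]
    ring
  rw [neg_zero] at this; exact this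

lemma core (s A B : ℝ) (hs : 0 < s) (hA : 0 < A) (hB : 0 < B) (n : ℕ) :
    ∫ y in Ioi (0:ℝ), uGamma s (A * y) * y ^ n * Real.exp (-(B * y))
      = Real.Gamma s * cco n B 0
        - ∑ i ∈ Finset.range (n + 1),
            A ^ s * cco n B i * ((1 / (A + B)) ^ (s + (i : ℝ)) * Real.Gamma (s + (i : ℝ))) := by
  set f : ℝ → ℝ := fun t => t ^ (s - 1) * Real.exp (-t) with hf
  set g : ℝ → ℝ := fun y => uGamma s (A * y) * Ffn n B y with hg
  set g' : ℝ → ℝ := fun y => (-(A * f (A * y))) * Ffn n B y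
      + uGamma s (A * y) * (y ^ n * Real.exp (-(B * y))) with hg'
  -- derivative of y ↦ uGamma s (A y)
  have hu : ∀ y ∈ Ioi (0:ℝ), HasDerivAt (fun z => uGamma s (A * z)) (-(A * f (A * y))) y := by
    intro y hy
    have hAy : 0 < A * y := mul_pos hA hy
    have h1 := (uGamma_hasDeriv hs hAy).comp y ((hasDerivAt_id y).const_mul A)
    refine h1.congr_deriv ?_
    simp [hf]
    ring
  have hderiv : ∀ y ∈ Ioi (0:ℝ), HasDerivAt g (g' y) y := by
    intro y hy
    exact (hu y hy).mul (Ffn_hasDeriv hB y)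
  -- continuity at 0 within Ici 0
  have hcont : ContinuousWithinAt g (Ici 0) 0 := by
    have h1 : ContinuousWithinAt (fun y => uGamma s (A * y)) (Ici 0) 0 := by
      have hmap : MapsTo (fun y : ℝ => A * y) (Ici 0) (Ici 0) :=
        fun y hy => mul_nonneg hA.le hy
      have hA0 : ContinuousWithinAt (fun y : ℝ => A * y) (Ici 0) 0 :=
        (continuous_const.mul continuous_id).continuousWithinAt
      have h00 : ContinuousWithinAt (uGamma s) (Ici 0) (A * 0) := by
        rw [mul_zero]; exact uGamma_cwa hs
      have := h00.comp hA0 hmap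
      exact this
    exact h1.mul ((Continuous.continuousWithinAt (by unfold Ffn; fun_prop)))
  -- integrability of g'
  have key_eq : ∀ y ∈ Ioi (0:ℝ), (-(A * f (A * y))) * Ffn n B y
      = ∑ i ∈ Finset.range (n + 1),
          A ^ s * cco n B i * (y ^ (s + (i : ℝ) - 1) * Real.exp (-((A + B) * y))) := by
    intro y hy
    have hy' : (0:ℝ) < y := hy
    have hAy : (0:ℝ) < A * y := mul_pos hA hy'
    simp only [Ffn, neg_mul_neg]
    rw [Finset.mul_sum, Finset.mul_sum]
    refine Finset.sum_congr rfl fun i _ => ?_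
    simp only [hf]
    rw [mul_rpow hA.le hy'.le, ← Real.rpow_natCast y i]
    rw [show s + (i:ℝ) - 1 = (s - 1) + (i:ℝ) by ring,
      Real.rpow_add hy', show -((A + B) * y) = -(A * y) + -(B * y) by ring, Real.exp_add]
    rw [show A ^ s = A * A ^ (s - 1) by
      rw [show A * A ^ (s - 1) = A ^ (1:ℝ) * A ^ (s - 1) by rw [Real.rpow_one],
        ← Real.rpow_add hA]; norm_num]
    ring
  have term_int : ∀ i : ℕ, IntegrableOn
      (fun y : ℝ => A ^ s * cco n B i * (y ^ (s + (i : ℝ) - 1) * Real.exp (-((A + B) * y))))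
      (Ioi 0) := by
    intro i
    have hi : (0:ℝ) ≤ i := Nat.cast_nonneg i
    have h := rexp_int (t := s + (i : ℝ)) (c := A + B) (by linarith) (by linarith)
    exact h.const_mul _
  have t1_int : IntegrableOn (fun y => (-(A * f (A * y))) * Ffn n B y) (Ioi 0) := by
    have hsum : IntegrableOn (fun y : ℝ => ∑ i ∈ Finset.range (n + 1),
        A ^ s * cco n B i * (y ^ (s + (i : ℝ) - 1) * Real.exp (-((A + B) * y)))) (Ioi 0) :=
      integrable_finset_sum _ fun i _ => term_int i
    exact hsum.congr_fun (fun y hy => (key_eq y hy).symm) measurableSet_Ioi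
  have hu_cont : ContinuousOn (fun y => uGamma s (A * y)) (Ioi 0) := by
    intro y hy
    exact ((hu y hy).continuousAt).continuousWithinAt
  have t2_meas : AEStronglyMeasurable (fun y => uGamma s (A * y) * (y ^ n * Real.exp (-(B * y))))
      (volume.restrict (Ioi (0:ℝ))) := by
    refine AEStronglyMeasurable.mul ?_ (Continuous.aestronglyMeasurable (by fun_prop))
    exact hu_cont.aestronglyMeasurable measurableSet_Ioi
  have t2_int : IntegrableOn (fun y => uGamma s (A * y) * (y ^ n * Real.exp (-(B * y)))) (Ioi 0) := by
    have hdom : IntegrableOn (fun y : ℝ => Real.Gamma s * (y ^ ((n : ℝ) + 1 - 1) * Real.exp (-(B * y)))) (Ioi 0) :=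
      (rexp_int (t := (n : ℝ) + 1) (by positivity) hB).const_mul _
    refine Integrable.mono hdom t2_meas ?_
    rw [ae_restrict_iff' measurableSet_Ioi]
    filter_upwards with y hy
    have hy' : (0:ℝ) < y := hy
    have hAy : (0:ℝ) ≤ A * y := mul_nonneg hA.le hy'.le
    have h1 : 0 ≤ uGamma s (A * y) := uGamma_nonneg hAy
    have h2 : uGamma s (A * y) ≤ Real.Gamma s := uGamma_le hs hAy
    rw [Real.norm_eq_abs, Real.norm_eq_abs]
    rw [show (n : ℝ) + 1 - 1 = (n : ℝ) by ring, Real.rpow_natCast]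
    have h3 : 0 ≤ y ^ n * Real.exp (-(B * y)) := by positivity
    rw [abs_of_nonneg (mul_nonneg h1 h3),
      abs_of_nonneg (mul_nonneg (Real.Gamma_nonneg_of_nonneg hs.le) h3)]
    exact mul_le_mul_of_nonneg_right h2 h3
  have g'_int : IntegrableOn g' (Ioi 0) := t1_int.add t2_int
  -- limit at infinity
  have hlim : Tendsto g atTop (nhds 0) := by
    have hb : ∀ᶠ y in atTop, ‖g y‖ ≤ Real.Gamma s * ‖Ffn n B y‖ := by
      filter_upwards [eventually_gt_atTop (0:ℝ)] with y hy
      rw [hg, norm_mul]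
      have hAy : (0:ℝ) ≤ A * y := mul_nonneg hA.le hy.le
      have h1 : 0 ≤ uGamma s (A * y) := uGamma_nonneg hAy
      have h2 : uGamma s (A * y) ≤ Real.Gamma s := uGamma_le hs hAy
      have : ‖uGamma s (A * y)‖ ≤ Real.Gamma s := by
        rw [Real.norm_eq_abs, abs_of_nonneg h1]; exact h2
      exact mul_le_mul_of_nonneg_right this (norm_nonneg _)
    have hz : Tendsto (fun y => Real.Gamma s * ‖Ffn n B y‖) atTop (nhds (Real.Gamma s * ‖(0:ℝ)‖)) :=
      ((Ffn_tendsto hB).norm).const_mul _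
    refine squeeze_zero_norm' hb ?_
    simpa using hz
  -- FTC
  have hFTC := integral_Ioi_of_hasDerivAt_of_tendsto hcont hderiv g'_int hlim
  -- g 0 = Γ s * Ffn n B 0
  have hg0 : g 0 = Real.Gamma s * (-(cco n B 0)) := by
    simp only [hg]
    rw [mul_zero, uGamma_zero hs, Ffn_zero]
  rw [hg0] at hFTC
  -- split the integral of g'
  have hsplit : ∫ y in Ioi (0:ℝ), g' y
      = (∫ y in Ioi (0:ℝ), (-(A * f (A * y))) * Ffn n B y)
        + ∫ y in Ioi (0:ℝ), uGamma s (A * y) * (y ^ n * Real.exp (-(B * y))) :=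
    integral_add t1_int t2_int
  -- value of the first integral
  have ht1_val : (∫ y in Ioi (0:ℝ), (-(A * f (A * y))) * Ffn n B y)
      = ∑ i ∈ Finset.range (n + 1),
          A ^ s * cco n B i * ((1 / (A + B)) ^ (s + (i : ℝ)) * Real.Gamma (s + (i : ℝ))) := by
    rw [setIntegral_congr_fun measurableSet_Ioi (fun y hy => key_eq y hy)]
    rw [integral_finset_sum _ fun i _ => term_int i]
    refine Finset.sum_congr rfl fun i _ => ?_
    rw [MeasureTheory.integral_const_mul]
    congr 1
    have hi : (0:ℝ) ≤ i := Nat.cast_nonneg i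
    exact integral_rpow_mul_exp_neg_mul_Ioi (by linarith) (by linarith)
  have hmain : ∫ y in Ioi (0:ℝ), uGamma s (A * y) * (y ^ n * Real.exp (-(B * y)))
      = Real.Gamma s * cco n B 0
        - ∑ i ∈ Finset.range (n + 1),
            A ^ s * cco n B i * ((1 / (A + B)) ^ (s + (i : ℝ)) * Real.Gamma (s + (i : ℝ))) := by
    rw [hsplit, ht1_val] at hFTC
    linarith [hFTC]
  rw [← hmain]
  exact setIntegral_congr_fun measurableSet_Ioi fun y _ => by ring

end IGIP

theorem incomplete_gamma_integral_Ppoly (m r κ : ℕ) (hm : 0 < m) (hr : 0 < r) (hκ : 2 ≤ κ)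
    (kf : ℝ) (hkf1 : kf < 1) (hkf : ∀ j : ℤ, kf ≠ j) :
    ∫ y in Set.Ioi (0 : ℝ), uGamma (1 - kf) (4 * π * m * y) * y ^ (κ - 2) * Real.exp (-(4 * π * r * y))
      = -((4 * π) ^ (1 - (κ : ℝ)) * (m : ℝ) ^ (1 - kf) * Real.Gamma (1 - kf) *
          ((κ - 2).factorial : ℝ) * (r : ℝ) ^ (1 - (κ : ℝ)) *
          (((r : ℝ) + (m : ℝ)) ^ (1 - ((κ : ℝ) - kf)) * Ppoly κ (2 - kf) (r : ℝ) (m : ℝ)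
            - (m : ℝ) ^ (kf - 1))) := by
  have hm' : (0:ℝ) < m := by exact_mod_cast hm
  have hr' : (0:ℝ) < r := by exact_mod_cast hr
  have hπ4 : (0:ℝ) < 4 * π := by positivity
  have hrm : (0:ℝ) < (r:ℝ) + (m:ℝ) := by linarith
  set s : ℝ := 1 - kf with hsdef
  have hs : 0 < s := by rw [hsdef]; linarith
  set n : ℕ := κ - 2 with hn
  have hκn : (κ:ℝ) = (n:ℝ) + 2 := by
    have h2 : κ = n + 2 := by rw [hn]; omega
    rw [h2]; push_cast; ring
  have hA : (0:ℝ) < 4 * π * (m:ℝ) := by positivity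
  have hB : (0:ℝ) < 4 * π * (r:ℝ) := by positivity
  have hπ5 : (4*π:ℝ) ^ ((1:ℝ) - (κ:ℝ)) = ((4*π:ℝ) ^ (n+1))⁻¹ := by
    rw [hκn, show (1:ℝ) - ((n:ℝ)+2) = -((n:ℝ)+1) by ring, Real.rpow_neg hπ4.le,
      show ((n:ℝ)+1) = ((n+1 : ℕ):ℝ) by push_cast; ring, Real.rpow_natCast]
  have hr4 : (r:ℝ) ^ ((1:ℝ) - (κ:ℝ)) = ((r:ℝ) ^ (n+1))⁻¹ := by
    rw [hκn, show (1:ℝ) - ((n:ℝ)+2) = -((n:ℝ)+1) by ring, Real.rpow_neg hr'.le,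
      show ((n:ℝ)+1) = ((n+1 : ℕ):ℝ) by push_cast; ring, Real.rpow_natCast]
  have hΓ : Real.Gamma s ≠ 0 := (Real.Gamma_pos_of_pos hs).ne'
  have hms : ((m:ℝ) ^ s : ℝ) ≠ 0 := (Real.rpow_pos_of_pos hm' s).ne'
  rw [IGIP.core s (4 * π * (m:ℝ)) (4 * π * (r:ℝ)) hs hA hB n]
  rw [Ppoly]
  rw [show κ - 1 = n + 1 by rw [hn]; omega]
  have h1 : Real.Gamma s * IGIP.cco n (4 * π * (r:ℝ)) 0
      = (4 * π) ^ (1 - (κ:ℝ)) * (m:ℝ) ^ s * Real.Gamma s * (n.factorial : ℝ)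
        * (r:ℝ) ^ (1 - (κ:ℝ)) * (m:ℝ) ^ (kf - 1) := by
    have hm2 : (m:ℝ) ^ (kf - 1) = ((m:ℝ) ^ s)⁻¹ := by
      rw [← Real.rpow_neg hm'.le]
      congr 1
      rw [hsdef]; ring
    rw [hπ5, hr4, hm2, IGIP.cco, mul_pow]
    simp only [Nat.factorial_zero, Nat.cast_one, pow_zero]
    field_simp
    ring
  have h2 : ∀ i ∈ Finset.range (n + 1),
      (4 * π * (m:ℝ)) ^ s * IGIP.cco n (4 * π * (r:ℝ)) i
          * ((1 / (4 * π * (m:ℝ) + 4 * π * (r:ℝ))) ^ (s + (i:ℝ)) * Real.Gamma (s + (i:ℝ)))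
        = (4 * π) ^ (1 - (κ:ℝ)) * (m:ℝ) ^ s * Real.Gamma s * (n.factorial : ℝ)
            * (r:ℝ) ^ (1 - (κ:ℝ))
          * (((r:ℝ) + (m:ℝ)) ^ (1 - ((κ:ℝ) - kf))
            * (genChoose ((i:ℝ) + (2 - kf) - 2) i * (r:ℝ) ^ i * ((r:ℝ) + (m:ℝ)) ^ (n - i))) := by
    intro i hi
    have hi' : i ≤ n := Finset.mem_range_succ_iff.mp hi
    have his : ((i.factorial : ℝ)) ≠ 0 := Nat.cast_ne_zero.mpr i.factorial_ne_zero
    have hABsplit : (1 / (4 * π * (m:ℝ) + 4 * π * (r:ℝ))) ^ (s + (i:ℝ))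
        = ((4*π:ℝ) ^ (s + (i:ℝ)))⁻¹ * ((((r:ℝ) + (m:ℝ))) ^ (s + (i:ℝ)))⁻¹ := by
      rw [show 4 * π * (m:ℝ) + 4 * π * (r:ℝ) = 4 * π * ((r:ℝ) + (m:ℝ)) by ring, one_div,
        Real.inv_rpow (by positivity), Real.mul_rpow hπ4.le hrm.le, mul_inv]
    have hπmerge : (4*π:ℝ) ^ (s + (i:ℝ)) = (4*π:ℝ) ^ s * (4*π:ℝ) ^ i := by
      rw [← Real.rpow_natCast (4*π:ℝ) i, ← Real.rpow_add hπ4]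
    have hEsplit : ((r:ℝ) + (m:ℝ)) ^ ((1:ℝ) - ((κ:ℝ) - kf))
        = ((((r:ℝ) + (m:ℝ))) ^ (s + (i:ℝ)))⁻¹ * ((((r:ℝ) + (m:ℝ))) ^ (n - i))⁻¹ := by
      rw [← Real.rpow_natCast ((r:ℝ) + (m:ℝ)) (n - i), Nat.cast_sub hi',
        ← Real.rpow_neg hrm.le, ← Real.rpow_neg hrm.le, ← Real.rpow_add hrm]
      congr 1
      rw [hκn, hsdef]; ring
    rw [genChoose,
      show (i:ℝ) + (2 - kf) - 2 + 1 = s + (i:ℝ) by rw [hsdef]; ring,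
      show (i:ℝ) + (2 - kf) - 2 - (i:ℝ) + 1 = s by rw [hsdef]; ring]
    rw [IGIP.cco, Real.mul_rpow hπ4.le hm'.le, mul_pow, mul_pow, hπ5, hr4, hABsplit,
      hπmerge, hEsplit]
    have hπs : ((4*π:ℝ) ^ s) ≠ 0 := (Real.rpow_pos_of_pos hπ4 s).ne'
    have hrms : (((r:ℝ) + (m:ℝ)) ^ (s + (i:ℝ))) ≠ 0 := (Real.rpow_pos_of_pos hrm _).ne'
    have hπi : ((4*π:ℝ) ^ i) ≠ 0 := pow_ne_zero _ hπ4.ne'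
    have hπn1 : ((4*π:ℝ) ^ (n+1)) ≠ 0 := pow_ne_zero _ hπ4.ne'
    have hrn1 : ((r:ℝ) ^ (n+1)) ≠ 0 := pow_ne_zero _ hr'.ne'
    have hrmni : (((r:ℝ) + (m:ℝ)) ^ (n - i)) ≠ 0 := pow_ne_zero _ hrm.ne'
    field_simp
    ring
  rw [Finset.sum_congr rfl h2, h1]
  rw [← Finset.mul_sum, ← Finset.mul_sum]
  ring
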